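/- Let G be a finite p-group whose center Z(G) is cyclic. Then G has a faithful irreducible complex representation. -/

import Mathlib

open CategoryTheory

lemma aux_mem_zpowers_of_orderOf_eq {C : Type*} [Group C] [Fintype C] [IsCyclic C]
    {p : ℕ} (hp : p.Prime) {a b : C} (ha : orderOf a = p) (hb : orderOf b = p) :
    b ∈ Subgroup.zpowers a := by
  classical
  set S : Finset C := Finset.univ.filter (fun x : C => x ^ p = 1) with hS
  have hcard : S.card ≤ p := IsCyclic.card_pow_eq_one_le hp.pos
  have hap : a ^ p = 1 := by rw [← ha]; exact pow_orderOf_eq_one a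
  have hsub : (Subgroup.zpowers a : Set C).toFinset ⊆ S := by
    intro x hx
    rw [Set.mem_toFinset] at hx
    obtain ⟨n, rfl⟩ := hx
    simp only [hS, Finset.mem_filter, Finset.mem_univ, true_and]
    rw [← zpow_natCast (a ^ n) p, ← zpow_mul, mul_comm, zpow_mul, zpow_natCast, hap, one_zpow]
  have hTcard : (Subgroup.zpowers a : Set C).toFinset.card = p := by
    rw [Set.toFinset_card]
    simpa using (Fintype.card_zpowers (x := a)).trans ha
  have : (Subgroup.zpowers a : Set C).toFinset = S :=
    Finset.eq_of_subset_of_card_le hsub (hcard.trans hTcard.ge)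
  have hbS : b ∈ S := by
    simp only [hS, Finset.mem_filter, Finset.mem_univ, true_and]
    rw [← hb]; exact pow_orderOf_eq_one b
  rw [← this, Set.mem_toFinset] at hbS
  exact hbS

lemma aux_normal_meets_center {p : ℕ} (hp : p.Prime) {G : Type} [Group G] [Finite G]
    (hG : IsPGroup p G) (N : Subgroup G) (hN : N.Normal) (hnt : N ≠ ⊥) :
    ∃ w : G, w ∈ N ∧ w ∈ Subgroup.center G ∧ w ≠ 1 := by
  haveI : Fact p.Prime := ⟨hp⟩
  haveI := hN
  have hpg : IsPGroup p (ConjAct G) := hG.of_equiv ConjAct.toConjAct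
  have h1 : (1 : N) ∈ MulAction.fixedPoints (ConjAct G) N := by
    intro g
    ext
    rw [ConjAct.Subgroup.val_conj_smul]
    simp
  have hdvd : p ∣ Nat.card N := by
    haveI : Nontrivial N := (Subgroup.nontrivial_iff_ne_bot N).mpr hnt
    obtain ⟨n, hn0, hn⟩ := ((hG.to_subgroup N).nontrivial_iff_card).mp inferInstance
    exact hn ▸ dvd_pow_self p hn0.ne'
  obtain ⟨b, hb, hb1⟩ := hpg.exists_fixed_point_of_prime_dvd_card_of_fixed_point N hdvd h1
  refine ⟨(b : G), b.2, ?_, ?_⟩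
  · rw [Subgroup.mem_center_iff]
    intro g
    have := hb (ConjAct.toConjAct g)
    have h2 : g * (b : G) * g⁻¹ = (b : G) := by
      have h3 := congrArg Subtype.val this
      rw [ConjAct.Subgroup.val_conj_smul] at h3
      rwa [ConjAct.smul_def, ConjAct.ofConjAct_toConjAct] at h3
    calc g * (b : G) = (g * (b : G) * g⁻¹) * g := by group
    _ = (b : G) * g := by rw [h2]
  · intro h
    exact hb1 (Subtype.ext h.symm)


variable {G : Type} [Group G] [Fintype G]

/-- The representation of `G` on a submodule of the group algebra. -/
noncomputable def subRep (W : Submodule (MonoidAlgebra ℂ G) (MonoidAlgebra ℂ G)) :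
    Representation ℂ G W where
  toFun g :=
    { toFun := fun w => ⟨MonoidAlgebra.single g (1:ℂ) • (w : MonoidAlgebra ℂ G),
        W.smul_mem _ w.2⟩
      map_add' := fun x y => Subtype.ext (by simp [mul_add])
      map_smul' := fun c x => Subtype.ext (by simp [smul_comm])
    }
  map_one' := by
    refine LinearMap.ext fun w => Subtype.ext ?_
    show MonoidAlgebra.single (1:G) (1:ℂ) • (w : MonoidAlgebra ℂ G) = w
    rw [← MonoidAlgebra.one_def, one_smul]
  map_mul' g h := by
    refine LinearMap.ext fun w => Subtype.ext ?_
    show MonoidAlgebra.single (g * h) (1:ℂ) • (w : MonoidAlgebra ℂ G)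
      = MonoidAlgebra.single g (1:ℂ) • MonoidAlgebra.single h (1:ℂ) • (w : MonoidAlgebra ℂ G)
    rw [← mul_smul, MonoidAlgebra.single_mul_single, mul_one]

lemma subRep_apply (W : Submodule (MonoidAlgebra ℂ G) (MonoidAlgebra ℂ G)) (g : G) (w : W) :
    (subRep W g w : MonoidAlgebra ℂ G) = MonoidAlgebra.single g (1:ℂ) • (w : MonoidAlgebra ℂ G) :=
  rfl

noncomputable instance fdA : FiniteDimensional ℂ (MonoidAlgebra ℂ G) :=
  Module.Finite.equiv (MonoidAlgebra.coeffLinearEquiv ℂ).symm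

noncomputable instance fdW (W : Submodule (MonoidAlgebra ℂ G) (MonoidAlgebra ℂ G)) :
    FiniteDimensional ℂ W :=
  FiniteDimensional.of_injective (LinearMap.restrictScalars ℂ W.subtype) Subtype.val_injective

lemma subRep_simple (W : Submodule (MonoidAlgebra ℂ G) (MonoidAlgebra ℂ G))
    (hW : IsSimpleModule (MonoidAlgebra ℂ G) W) :
    Simple (FDRep.of (subRep W)) := by
  constructor
  intro Y f hf
  constructor
  · intro hiso h0
    haveI := hW
    haveI : Nontrivial W := IsSimpleModule.nontrivial (MonoidAlgebra ℂ G) W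
    obtain ⟨w, hw⟩ := exists_ne (0 : W)
    have h1 : (𝟙 (FDRep.of (subRep W)) : _ ⟶ _) = inv f ≫ f := (IsIso.inv_hom_id f).symm
    have h1' : 𝟙 (FDRep.of (subRep W)) = 0 :=
      h1.trans ((congrArg (fun t => inv f ≫ t) h0).trans Limits.comp_zero)
    apply hw
    have h2 := congrArg (fun (φ : FDRep.of (subRep W) ⟶ FDRep.of (subRep W)) => φ.hom w) h1'
    exact h2
  · intro hne
    have hhomne : f.hom ≠ 0 := fun h => hne (by ext1; exact h)
    -- injectivity of f.hom
    have hKstab : ∀ (g : G), ∀ x ∈ LinearMap.ker (ConcreteCategory.hom (C := FGModuleCat ℂ) f.hom), Y.ρ g x ∈ LinearMap.ker (ConcreteCategory.hom (C := FGModuleCat ℂ) f.hom) := by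
      intro g x hx
      have hcomm := congrArg (fun (φ : Y.V ⟶ (FDRep.of (subRep W)).V) => φ x) (f.comm g)
      simp only [LinearMap.mem_ker] at hx ⊢
      show f.hom (Y.ρ g x) = 0
      have : f.hom (Y.ρ g x) = (FDRep.of (subRep W)).ρ g (f.hom x) := hcomm
      rw [this, hx, map_zero]
    let ρK : Representation ℂ G (LinearMap.ker (ConcreteCategory.hom (C := FGModuleCat ℂ) f.hom)) :=
      { toFun := fun g => (Y.ρ g).restrict (hKstab g)
        map_one' := by
          refine LinearMap.ext fun x => Subtype.ext ?_
          simp [LinearMap.restrict_apply]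
        map_mul' := fun g h => LinearMap.ext fun x => Subtype.ext (by
          show Y.ρ (g * h) x.1 = Y.ρ g (Y.ρ h x.1)
          rw [map_mul]; rfl) }
    let incl : FDRep.of ρK ⟶ Y :=
      ⟨FGModuleCat.ofHom (LinearMap.ker (ConcreteCategory.hom (C := FGModuleCat ℂ) f.hom)).subtype, fun g => FGModuleCat.hom_ext (LinearMap.ext fun x => rfl)⟩
    have hz : incl ≫ f = 0 := by
      ext1
      refine FGModuleCat.hom_ext (LinearMap.ext fun x => ?_)
      show f.hom ((LinearMap.ker (ConcreteCategory.hom (C := FGModuleCat ℂ) f.hom)).subtype x) = 0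
      exact x.2
    have hincl : incl = 0 := (cancel_mono f).mp (by rw [hz, Limits.zero_comp])
    have hinj : Function.Injective f.hom := by
      rw [← LinearMap.ker_eq_bot]
      rw [Submodule.eq_bot_iff]
      intro x hx
      have := congrArg (fun (φ : FDRep.of ρK ⟶ Y) => φ.hom ⟨x, hx⟩) hincl
      exact this
    -- surjectivity of f.hom
    let S : Submodule ℂ W := LinearMap.range (ConcreteCategory.hom (C := FGModuleCat ℂ) f.hom)
    have hrange : ∀ (a : MonoidAlgebra ℂ G) (w : W), w ∈ S → a • w ∈ S := by
      intro a w hw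
      induction a using MonoidAlgebra.induction with
      | zero => simpa using S.zero_mem
      | single_add g c a hg hc ih =>
        rw [add_smul]
        refine S.add_mem ?_ ih
        obtain ⟨y, hy⟩ := hw
        refine ⟨c • Y.ρ g y, ?_⟩
        have hcomm := congrArg (fun (φ : Y.V ⟶ (FDRep.of (subRep W)).V) => φ y) (f.comm g)
        have h3 : f.hom (Y.ρ g y) = (FDRep.of (subRep W)).ρ g (f.hom y) := hcomm
        have hy' : f.hom y = w := hy
        rw [hy'] at h3
        show f.hom (c • Y.ρ g y) = MonoidAlgebra.single g c • w
        rw [map_smul, h3]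
        refine Subtype.ext ?_
        show c • (MonoidAlgebra.single g (1:ℂ) • (w : MonoidAlgebra ℂ G))
          = MonoidAlgebra.single g c • (w : MonoidAlgebra ℂ G)
        rw [← smul_assoc, MonoidAlgebra.smul_single', mul_one]
    let P : Submodule (MonoidAlgebra ℂ G) W :=
      { carrier := (S : Set W)
        add_mem' := fun ha hb => S.add_mem ha hb
        zero_mem' := S.zero_mem
        smul_mem' := fun a w hw => hrange a w hw }
    have hP : P = ⊤ := by
      rcases eq_bot_or_eq_top P with h | h
      · exfalso
        apply hhomne
        refine FGModuleCat.hom_ext (LinearMap.ext fun y => ?_)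
        have : f.hom y ∈ P := ⟨y, rfl⟩
        rw [h] at this
        exact (Submodule.mem_bot _).mp this
      · exact h
    have hsurj : Function.Surjective f.hom := by
      rw [← Set.range_eq_univ]
      have h4 := congrArg (fun (Q : Submodule (MonoidAlgebra ℂ G) W) => (Q : Set W)) hP
      rw [← LinearMap.coe_range]
      exact h4
    let e : Y.V ≃ₗ[ℂ] W := LinearEquiv.ofBijective (ConcreteCategory.hom (C := FGModuleCat ℂ) f.hom) ⟨hinj, hsurj⟩
    have hfeq : f = (Action.mkIso (M := Y) (N := FDRep.of (subRep W)) e.toFGModuleCatIso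
        (fun g => f.comm g)).hom := by
      ext1
      rfl
    rw [hfeq]
    infer_instance

theorem stmt_14 (p : ℕ) (hp : p.Prime) (G : Type) [Group G] [Finite G]
    (hG : IsPGroup p G) (hc : IsCyclic (Subgroup.center G)) :
    ∃ V : FDRep ℂ G, Simple V ∧ Function.Injective V.ρ := by
  haveI := Fintype.ofFinite G
  haveI : Fact p.Prime := ⟨hp⟩
  haveI : NeZero ((Fintype.card G : ℂ)) := ⟨by exact_mod_cast Fintype.card_ne_zero⟩
  rcases subsingleton_or_nontrivial G with hsub | hnt
  · obtain ⟨W, hW⟩ := IsSemisimpleModule.exists_simple_submodule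
      (MonoidAlgebra ℂ G) (MonoidAlgebra ℂ G)
    exact ⟨FDRep.of (subRep W), subRep_simple W hW, fun a b _ => Subsingleton.elim a b⟩
  · -- find central element of order p
    obtain ⟨zc, hzc⟩ : ∃ zc : Subgroup.center G, orderOf zc = p := by
      haveI := hG.center_nontrivial
      have hcent : IsPGroup p (Subgroup.center G) := hG.to_subgroup _
      obtain ⟨n, hn0, hn⟩ := hcent.nontrivial_iff_card.mp inferInstance
      refine exists_prime_orderOf_dvd_card' p ?_
      rw [hn]; exact dvd_pow_self p hn0.ne'
    have hoz : orderOf (zc : G) = p := by rw [Subgroup.orderOf_coe, hzc]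
    have hz1 : (zc : G) ≠ 1 := by
      intro h
      rw [h, orderOf_one] at hoz
      exact hp.one_lt.ne' hoz.symm
    have hcomm_single : ∀ a : MonoidAlgebra ℂ G,
        Commute (MonoidAlgebra.single (zc : G) (1:ℂ)) a := fun a =>
      MonoidAlgebra.single_commute
        (fun g' => (Subgroup.mem_center_iff.mp zc.2 g').symm)
        (fun b' => Commute.one_left b') a
    let T : Submodule (MonoidAlgebra ℂ G) (MonoidAlgebra ℂ G) :=
      { carrier := {x | MonoidAlgebra.single (zc : G) (1:ℂ) • x = x}
        zero_mem' := smul_zero _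
        add_mem' := fun {x} {y} hx hy => by
          show MonoidAlgebra.single (zc : G) (1:ℂ) • (x + y) = x + y
          rw [smul_add]
          rw [show MonoidAlgebra.single (zc : G) (1:ℂ) • x = x from hx,
            show MonoidAlgebra.single (zc : G) (1:ℂ) • y = y from hy]
        smul_mem' := fun a x hx => by
          show MonoidAlgebra.single (zc : G) (1:ℂ) • (a • x) = a • x
          have hx' : MonoidAlgebra.single (zc : G) (1:ℂ) • x = x := hx
          rw [smul_eq_mul, smul_eq_mul, ← mul_assoc, (hcomm_single a).eq, mul_assoc]
          rw [smul_eq_mul] at hx'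
          rw [hx'] }
    have hT : ¬ (⊤ : Submodule (MonoidAlgebra ℂ G) (MonoidAlgebra ℂ G)) ≤ T := by
      intro h
      have h1 : MonoidAlgebra.single (zc : G) (1:ℂ) • (1 : MonoidAlgebra ℂ G) = 1 :=
        h (Submodule.mem_top (x := (1 : MonoidAlgebra ℂ G)))
      rw [smul_eq_mul, mul_one, MonoidAlgebra.one_def] at h1
      rcases MonoidAlgebra.single_inj.mp h1 with ⟨h2, _⟩ | ⟨h2, _⟩
      · exact hz1 h2
      · exact one_ne_zero h2
    rw [← IsSemisimpleModule.sSup_simples_eq_top (MonoidAlgebra ℂ G) (MonoidAlgebra ℂ G)] at hT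
    have hT2 : ¬ ∀ W ∈ {m : Submodule (MonoidAlgebra ℂ G) (MonoidAlgebra ℂ G) |
        IsSimpleModule (MonoidAlgebra ℂ G) m}, W ≤ T := fun h => hT (sSup_le h)
    push_neg at hT2
    obtain ⟨W, hWs, hWle⟩ := hT2
    obtain ⟨x, hxW, hxT⟩ := SetLike.not_le_iff_exists.mp hWle
    refine ⟨FDRep.of (subRep W), subRep_simple W hWs, ?_⟩
    -- kernel subgroup
    let N : Subgroup G :=
      { carrier := {g | subRep W g = 1}
        one_mem' := map_one _
        mul_mem' := fun {a} {b} ha hb => by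
          show subRep W (a * b) = 1
          rw [map_mul, show subRep W a = 1 from ha, show subRep W b = 1 from hb, mul_one]
        inv_mem' := fun {g} hg => by
          show subRep W g⁻¹ = 1
          have h2 : subRep W g⁻¹ * subRep W g = 1 := by
            rw [← map_mul, inv_mul_cancel, map_one]
          rwa [show subRep W g = 1 from hg, mul_one] at h2 }
    have hN : N.Normal := by
      constructor
      intro n hn g
      show subRep W (g * n * g⁻¹) = 1
      rw [map_mul, map_mul, show subRep W n = 1 from hn, mul_one, ← map_mul,
        mul_inv_cancel, map_one]
    have hNbot : N = ⊥ := by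
      by_contra hne
      obtain ⟨w, hwN, hwC, hw1⟩ := aux_normal_meets_center hp hG N hN hne
      obtain ⟨k, hk⟩ := hG w
      have hdvd : orderOf w ∣ p ^ k := orderOf_dvd_of_pow_eq_one hk
      obtain ⟨j, hjle, hj⟩ := (Nat.dvd_prime_pow hp).mp hdvd
      have hj0 : j ≠ 0 := by
        rintro rfl
        rw [pow_zero] at hj
        exact hw1 (orderOf_eq_one_iff.mp hj)
      have ho' : orderOf (w ^ p ^ (j - 1)) = p := by
        rw [orderOf_pow' w (pow_ne_zero _ hp.pos.ne'), hj,
          Nat.gcd_eq_right (pow_dvd_pow p (Nat.sub_le j 1)),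
          Nat.pow_div (Nat.sub_le j 1) hp.pos, Nat.sub_sub_self (Nat.one_le_iff_ne_zero.mpr hj0),
          pow_one]
      have hw'N : w ^ p ^ (j - 1) ∈ N := N.pow_mem hwN _
      have hw'C : w ^ p ^ (j - 1) ∈ Subgroup.center G := (Subgroup.center G).pow_mem hwC _
      have hwc : orderOf (⟨w ^ p ^ (j - 1), hw'C⟩ : Subgroup.center G) = p := by
        rw [Subgroup.orderOf_mk]; exact ho'
      haveI : Fintype (Subgroup.center G) := Fintype.ofFinite _
      have hzmem := aux_mem_zpowers_of_orderOf_eq hp hwc hzc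
      have hzN : (zc : G) ∈ N := by
        have hmem : (zc : G) ∈ Subgroup.zpowers (w ^ p ^ (j - 1)) := by
          obtain ⟨n, hn⟩ := Subgroup.mem_zpowers_iff.mp hzmem
          refine Subgroup.mem_zpowers_iff.mpr ⟨n, ?_⟩
          have := congrArg (Subtype.val) hn
          rw [SubgroupClass.coe_zpow] at this
          exact this
        exact (Subgroup.zpowers_le.mpr hw'N) hmem
      have h1 : subRep W (zc : G) = 1 := hzN
      apply hxT
      show MonoidAlgebra.single (zc : G) (1:ℂ) • x = x
      have h2 := congrArg (fun φ : W →ₗ[ℂ] W => (φ ⟨x, hxW⟩ : MonoidAlgebra ℂ G)) h1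
      simpa [subRep_apply] using h2
    intro a b hab
    have hab' : subRep W a = subRep W b := hab
    have h : b⁻¹ * a ∈ N := by
      show subRep W (b⁻¹ * a) = 1
      rw [map_mul, hab', ← map_mul, inv_mul_cancel, map_one]
    rw [hNbot, Subgroup.mem_bot] at h
    exact (inv_mul_eq_one.mp h).symm
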